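/- Suppose n ≥ 100 and L ≤ (1/8)·(ln n/n)^(1/3), and fix the public ratings so that neither event B4 nor event B5 occurs. Then the conditional expectation, over the independent uniform private scores, of the number of men m_i such that for every rank j the match (m_i, w_j) gives m_i a loss exceeding L or gives w_j a loss exceeding L, is at least n^(7/8). -/

import Mathlib

open MeasureTheory

noncomputable section

/-- The uniform probability measure on `[0,1]`. -/
def unif : Measure ℝ := volume.restrict (Set.Icc (0:ℝ) 1)

/-- Joint law of all private scores: men's scores for women and women's scores for
men, all i.i.d. uniform on `[0,1]`. -/
def scoresMeasure (n : ℕ) :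
    Measure ((Fin n → Fin n → ℝ) × (Fin n → Fin n → ℝ)) :=
  (Measure.pi fun _ => Measure.pi fun _ => unif).prod
    (Measure.pi fun _ => Measure.pi fun _ => unif)

/-- 0-indexed rank: the number of agents with strictly larger rating. -/
def rankOf {n : ℕ} (r : Fin n → ℝ) (a : Fin n) : ℕ :=
  (Finset.univ.filter fun b => r a < r b).card

/-- Number of agents whose rating lies in the closed interval with endpoints `s` and `t`. -/
def countBetween {n : ℕ} (r : Fin n → ℝ) (s t : ℝ) : ℕ :=
  (Finset.univ.filter fun m => min s t ≤ r m ∧ r m ≤ max s t).card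

/-- Event B4 (see the paper). -/
def EventB4 (n : ℕ) (L : ℝ) (rM rW : Fin n → ℝ) : Prop :=
  ∃ a a' b b' : Fin n, a ≠ a' ∧
    rankOf rM a = rankOf rW b ∧ rankOf rM a' = rankOf rW b' ∧
    ((|rM a - rM a'| ≤ 4*L ∧
      ¬ (2 + |rM a - rM a'| * ((n:ℝ)-2) - L*((n:ℝ)-2) <
           (countBetween rM (rM a) (rM a') : ℝ) ∧
         (countBetween rM (rM a) (rM a') : ℝ) <
           2 + |rM a - rM a'| * ((n:ℝ)-2) + L*((n:ℝ)-2))) ∨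
     (|rW b - rW b'| ≤ 4*L ∧
      ¬ (2 + |rW b - rW b'| * ((n:ℝ)-2) - L*((n:ℝ)-2) <
           (countBetween rW (rW b) (rW b') : ℝ) ∧
         (countBetween rW (rW b) (rW b') : ℝ) <
           2 + |rW b - rW b'| * ((n:ℝ)-2) + L*((n:ℝ)-2))))

/-- Event B5 (see the paper). -/
def EventB5 (n : ℕ) (L : ℝ) (rM rW : Fin n → ℝ) : Prop :=
  ∃ a a' b b' : Fin n, a ≠ a' ∧
    rankOf rM a = rankOf rW b ∧ rankOf rM a' = rankOf rW b' ∧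
    ((4*L < |rW b - rW b'| ∧
        (countBetween rW (rW b) (rW b') : ℝ) ≤ 2 + 3*L*((n:ℝ)-2)) ∨
     (4*L < |rM a - rM a'| ∧
        (countBetween rM (rM a) (rM a') : ℝ) ≤ 2 + 3*L*((n:ℝ)-2)))

/-! ### Rank basics -/

section RankLemmas

variable {n : ℕ} {r : Fin n → ℝ}

lemma rank_lt_of_lt (hr : Function.Injective r) {a b : Fin n} (h : r b < r a) :
    rankOf r a < rankOf r b := by
  apply Finset.card_lt_card
  constructor
  · intro c hc
    simp only [Finset.mem_filter, Finset.mem_univ, true_and] at *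
    exact lt_trans h hc
  · intro hsub
    have ha : a ∈ Finset.univ.filter fun c => r b < r c := by simp [h]
    have := hsub ha
    simp at this

lemma rank_lt_iff (hr : Function.Injective r) {a b : Fin n} :
    rankOf r a < rankOf r b ↔ r b < r a := by
  constructor
  · intro h
    rcases lt_trichotomy (r a) (r b) with h' | h' | h'
    · have := rank_lt_of_lt hr h'; omega
    · rw [hr h'] at h; omega
    · exact h'
  · exact rank_lt_of_lt hr

lemma rank_injective (hr : Function.Injective r) :
    Function.Injective (rankOf r) := by
  intro a b h
  by_contra hne
  rcases lt_trichotomy (r a) (r b) with h' | h' | h'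
  · have := rank_lt_of_lt hr h'; omega
  · exact hne (hr h')
  · have := rank_lt_of_lt hr h'; omega

lemma rankOf_lt (a : Fin n) : rankOf r a < n := by
  have h1 : rankOf r a ≤ n := by
    simpa [rankOf] using Finset.card_filter_le Finset.univ (fun b => r a < r b)
  rcases eq_or_lt_of_le h1 with h | h
  · exfalso
    have hcard : (Finset.univ.filter fun b => r a < r b).card = Fintype.card (Fin n) := by
      simpa [rankOf] using h
    have heq := Finset.eq_univ_of_card _ hcard
    have : a ∈ Finset.univ.filter fun b => r a < r b := by
      rw [heq]; exact Finset.mem_univ a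
    simp at this
  · exact h

lemma card_filter_le (hr : Function.Injective r) (a : Fin n) :
    (Finset.univ.filter fun b => r a ≤ r b).card = rankOf r a + 1 := by
  have : (Finset.univ.filter fun b => r a ≤ r b)
      = insert a (Finset.univ.filter fun b => r a < r b) := by
    ext b
    simp only [Finset.mem_filter, Finset.mem_univ, true_and, Finset.mem_insert]
    constructor
    · intro h
      rcases eq_or_lt_of_le h with h' | h'
      · exact Or.inl (hr h'.symm)
      · exact Or.inr h'
    · rintro (rfl | h) <;> [exact le_refl _; exact le_of_lt h]
  rw [this, Finset.card_insert_of_notMem (by simp), rankOf]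

lemma countBetween_eq (hr : Function.Injective r) {a b : Fin n} (h : r a < r b) :
    countBetween r (r a) (r b) = rankOf r a - rankOf r b + 1 := by
  have hmin : min (r a) (r b) = r a := min_eq_left h.le
  have hmax : max (r a) (r b) = r b := max_eq_right h.le
  have hset : (Finset.univ.filter fun m => min (r a) (r b) ≤ r m ∧ r m ≤ max (r a) (r b))
      = (Finset.univ.filter fun m => r a ≤ r m) \ (Finset.univ.filter fun m => r b < r m) := by
    ext m
    simp only [Finset.mem_filter, Finset.mem_univ, true_and, Finset.mem_sdiff, hmin, hmax,
      not_lt]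
    try tauto
  have hsub : (Finset.univ.filter fun m => r b < r m)
      ⊆ (Finset.univ.filter fun m => r a ≤ r m) := by
    intro m hm
    simp only [Finset.mem_filter, Finset.mem_univ, true_and] at *
    exact (le_of_lt (lt_trans h hm))
  have hrank : rankOf r b < rankOf r a := rank_lt_of_lt hr h
  rw [countBetween, hset, Finset.card_sdiff_of_subset hsub, card_filter_le hr]
  show rankOf r a + 1 - rankOf r b = _
  omega

lemma countBetween_comm (s t : ℝ) : countBetween r s t = countBetween r t s := by
  simp [countBetween, min_comm, max_comm]

lemma countBetween_real (hr : Function.Injective r) {a b : Fin n} (hab : a ≠ b) :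
    (countBetween r (r a) (r b) : ℝ)
      = |(rankOf r a : ℝ) - rankOf r b| + 1 := by
  rcases lt_trichotomy (r a) (r b) with h | h | h
  · have h2 := rank_lt_of_lt hr h
    rw [countBetween_eq hr h]
    rw [abs_of_nonneg (sub_nonneg.mpr (by exact_mod_cast h2.le))]
    push_cast [Nat.cast_sub h2.le]
    ring
  · exact absurd (hr h) hab
  · have h2 := rank_lt_of_lt hr h
    rw [countBetween_comm, countBetween_eq hr h]
    rw [abs_of_nonpos (sub_nonpos.mpr (by exact_mod_cast h2.le))]
    push_cast [Nat.cast_sub h2.le]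
    ring

end RankLemmas

/-! ### The uniform measure and clamping -/

instance : IsProbabilityMeasure unif := by
  constructor
  rw [unif, Measure.restrict_apply MeasurableSet.univ, Set.univ_inter, Real.volume_Icc]
  norm_num

/-- clamp to [0,1] -/
def cl (x : ℝ) : ℝ := max (min x 1) 0

lemma cl_nonneg (x : ℝ) : 0 ≤ cl x := le_max_right _ _
lemma cl_le_one (x : ℝ) : cl x ≤ 1 := max_le (min_le_right _ _) zero_le_one
lemma cl_le_self {x : ℝ} (h : 0 ≤ x) : cl x ≤ x := max_le (min_le_left _ _) h
lemma cl_add_cl_one_sub (x : ℝ) : cl x + cl (1 - x) = 1 := by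
  unfold cl
  rcases le_total x 0 with h | h <;> rcases le_total x 1 with h1 | h1 <;>
    simp [max_def, min_def] <;> split_ifs <;> linarith
lemma cl_pos_arg {x : ℝ} (h : 0 < cl x) : 0 < x := by
  by_contra h'
  push_neg at h'
  have : cl x = 0 := by unfold cl; rw [max_eq_right]; exact le_trans (min_le_left _ _) h'
  rw [this] at h; exact lt_irrefl _ h

lemma unif_Iio (c : ℝ) : unif (Set.Iio c) = ENNReal.ofReal (cl c) := by
  rw [unif, Measure.restrict_apply' measurableSet_Icc]
  rcases le_or_gt c 0 with h | h
  · have : Set.Iio c ∩ Set.Icc 0 1 = ∅ := by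
      ext x; simp only [Set.mem_inter_iff, Set.mem_Iio, Set.mem_Icc, Set.mem_empty_iff_false,
        iff_false, not_and]
      intro hx h0 ; linarith
    rw [this]
    have : cl c = 0 := by unfold cl; rw [max_eq_right]; exact le_trans (min_le_left _ _) h
    simp [this]
  · rcases le_or_gt c 1 with h1 | h1
    · have : Set.Iio c ∩ Set.Icc 0 1 = Set.Ico 0 c := by
        ext x; simp only [Set.mem_inter_iff, Set.mem_Iio, Set.mem_Icc, Set.mem_Ico]
        constructor
        · rintro ⟨hx, h0, _⟩; exact ⟨h0, hx⟩
        · rintro ⟨h0, hx⟩; exact ⟨hx, h0, by linarith⟩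
      rw [this, Real.volume_Ico]
      have : cl c = c := by unfold cl; rw [min_eq_left h1, max_eq_left h.le]
      rw [this, sub_zero]
    · have : Set.Iio c ∩ Set.Icc 0 1 = Set.Icc 0 1 := by
        ext x; simp only [Set.mem_inter_iff, Set.mem_Iio, Set.mem_Icc]
        constructor
        · rintro ⟨_, h0, hx⟩; exact ⟨h0, hx⟩
        · rintro ⟨h0, hx⟩; exact ⟨by linarith, h0, hx⟩
      rw [this, Real.volume_Icc]
      have : cl c = 1 := by unfold cl; rw [min_eq_right h1.le, max_eq_left zero_le_one]
      rw [this]; norm_num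

lemma unif_Ici (c : ℝ) : unif (Set.Ici c) = ENNReal.ofReal (cl (1 - c)) := by
  rw [unif, Measure.restrict_apply' measurableSet_Icc]
  rcases le_or_gt c 0 with h | h
  · have : Set.Ici c ∩ Set.Icc 0 1 = Set.Icc 0 1 := by
      ext x; simp only [Set.mem_inter_iff, Set.mem_Ici, Set.mem_Icc]
      constructor
      · rintro ⟨_, h0, hx⟩; exact ⟨h0, hx⟩
      · rintro ⟨h0, hx⟩; exact ⟨by linarith, h0, hx⟩
    rw [this, Real.volume_Icc]
    have : cl (1 - c) = 1 := by
      unfold cl; rw [min_eq_right (by linarith), max_eq_left zero_le_one]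
    rw [this]; norm_num
  · rcases le_or_gt c 1 with h1 | h1
    · have : Set.Ici c ∩ Set.Icc 0 1 = Set.Icc c 1 := by
        ext x; simp only [Set.mem_inter_iff, Set.mem_Ici, Set.mem_Icc]
        constructor
        · rintro ⟨hx, _, hx1⟩; exact ⟨hx, hx1⟩
        · rintro ⟨hx, hx1⟩; exact ⟨hx, by linarith, hx1⟩
      rw [this, Real.volume_Icc]
      have : cl (1 - c) = 1 - c := by
        unfold cl; rw [min_eq_left (by linarith), max_eq_left (by linarith)]
      rw [this]
    · have : Set.Ici c ∩ Set.Icc 0 1 = ∅ := by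
        ext x; simp only [Set.mem_inter_iff, Set.mem_Ici, Set.mem_Icc,
          Set.mem_empty_iff_false, iff_false, not_and]
        intro hx h0; linarith
      rw [this]
      have : cl (1 - c) = 0 := by
        unfold cl; rw [max_eq_right]; exact le_trans (min_le_left _ _) (by linarith)
      simp [this]

/-- cylinder sets in a pi-type of probability measures -/
lemma pi_eval_cyl {ι : Type*} [Fintype ι] {X : Type*} [MeasurableSpace X]
    (μ : Measure X) [IsProbabilityMeasure μ] (a : ι) (U : Set X) :
    (Measure.pi fun _ : ι => μ) {u | u a ∈ U} = μ U := by
  classical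
  have : {u : ι → X | u a ∈ U} = Set.pi Set.univ (fun i => if i = a then U else Set.univ) := by
    ext u
    simp only [Set.mem_setOf_eq, Set.mem_pi, Set.mem_univ, forall_true_left]
    constructor
    · intro h i; split_ifs with hi; · subst hi; exact h
      · trivial
    · intro h; have := h a; simpa using this
  rw [this, Measure.pi_pi]
  rw [Finset.prod_eq_single a (fun i _ hi => by simp [hi]) (by simp)]
  simp

open scoped ENNReal

lemma scores_event_measure (n : ℕ) (a : Fin n) (α β : Fin n → ℝ) :
    scoresMeasure n {s | ∀ b, s.1 a b < α b ∨ s.2 b a < β b}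
      = ∏ b, ENNReal.ofReal (1 - cl (1 - α b) * cl (1 - β b)) := by
  classical
  set F : Finset (Fin n) → Set (Fin n → Fin n → ℝ) :=
    fun T => {f | ∀ b, f a b ∈ (if b ∈ T then Set.Iio (α b) else Set.Ici (α b))} with hF
  set G : Finset (Fin n) → Set (Fin n → Fin n → ℝ) :=
    fun T => {g | ∀ b, g b a ∈ (if b ∈ T then Set.univ else Set.Iio (β b))} with hG
  have hFm : ∀ T, MeasurableSet (F T) := by
    intro T
    have : F T = ⋂ b, {f : Fin n → Fin n → ℝ |
        f a b ∈ (if b ∈ T then Set.Iio (α b) else Set.Ici (α b))} := by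
      ext f; simp [hF]
    rw [this]
    refine MeasurableSet.iInter fun b => ?_
    refine ((measurable_pi_apply b).comp (measurable_pi_apply a)) ?_
    split_ifs <;> [exact measurableSet_Iio; exact measurableSet_Ici]
  have hGm : ∀ T, MeasurableSet (G T) := by
    intro T
    have : G T = ⋂ b, {g : Fin n → Fin n → ℝ |
        g b a ∈ (if b ∈ T then Set.univ else Set.Iio (β b))} := by
      ext g; simp [hG]
    rw [this]
    refine MeasurableSet.iInter fun b => ?_
    refine ((measurable_pi_apply a).comp (measurable_pi_apply b)) ?_
    split_ifs <;> [exact MeasurableSet.univ; exact measurableSet_Iio]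
  have hE : {s : (Fin n → Fin n → ℝ) × (Fin n → Fin n → ℝ) |
      ∀ b, s.1 a b < α b ∨ s.2 b a < β b} = ⋃ T : Finset (Fin n), (F T) ×ˢ (G T) := by
    ext s
    simp only [Set.mem_setOf_eq, Set.mem_iUnion, Set.mem_prod, hF, hG]
    constructor
    · intro h
      refine ⟨Finset.univ.filter (fun b => s.1 a b < α b), fun b => ?_, fun b => ?_⟩
      · split_ifs with hb
        · simpa using (Finset.mem_filter.mp hb).2
        · simp only [Finset.mem_filter, Finset.mem_univ, true_and] at hb
          exact not_lt.mp hb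
      · split_ifs with hb
        · trivial
        · simp only [Finset.mem_filter, Finset.mem_univ, true_and] at hb
          exact (h b).resolve_left hb
    · rintro ⟨T, h1, h2⟩ b
      by_cases hb : b ∈ T
      · left; have := h1 b; rw [if_pos hb] at this; exact this
      · right; have := h2 b; rw [if_neg hb] at this; exact this
  have hdisj : Pairwise (Function.onFun Disjoint (fun T => (F T) ×ˢ (G T))) := by
    intro T T' hTT'
    rw [Function.onFun, Set.disjoint_left]
    rintro s ⟨hs1, _⟩ ⟨hs1', _⟩
    obtain ⟨b, hb⟩ : ∃ b, (b ∈ T ∧ b ∉ T') ∨ (b ∈ T' ∧ b ∉ T) := by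
      by_contra hc
      push_neg at hc
      exact hTT' (Finset.ext fun b => ⟨fun h => (hc b).1 h, fun h => (hc b).2 h⟩)
    have v1 := hs1 b
    have v1' := hs1' b
    rcases hb with ⟨hbT, hbT'⟩ | ⟨hbT', hbT⟩
    · rw [if_pos hbT] at v1; rw [if_neg hbT'] at v1'
      exact absurd (Set.mem_Iio.mp v1) (not_lt.mpr (Set.mem_Ici.mp v1'))
    · rw [if_pos hbT'] at v1'; rw [if_neg hbT] at v1
      exact absurd (Set.mem_Iio.mp v1') (not_lt.mpr (Set.mem_Ici.mp v1))
  rw [hE, measure_iUnion hdisj (fun T => (hFm T).prod (hGm T)), tsum_fintype]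
  have hμ1 : ∀ T, (Measure.pi fun _ : Fin n => Measure.pi fun _ : Fin n => unif) (F T)
      = ∏ b, unif (if b ∈ T then Set.Iio (α b) else Set.Ici (α b)) := by
    intro T
    have : F T = {f : Fin n → Fin n → ℝ |
        f a ∈ Set.pi Set.univ (fun b => if b ∈ T then Set.Iio (α b) else Set.Ici (α b))} := by
      ext f; simp [hF, Set.mem_pi]
    rw [this, pi_eval_cyl, Measure.pi_pi]
  have hμ2 : ∀ T, (Measure.pi fun _ : Fin n => Measure.pi fun _ : Fin n => unif) (G T)
      = ∏ b, unif (if b ∈ T then Set.univ else Set.Iio (β b)) := by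
    intro T
    have : G T = Set.pi Set.univ (fun b => {u : Fin n → ℝ |
        u a ∈ (if b ∈ T then Set.univ else Set.Iio (β b))}) := by
      ext g; simp [hG, Set.mem_pi]
    rw [this, Measure.pi_pi]
    exact Finset.prod_congr rfl fun b _ => pi_eval_cyl _ _ _
  have hRT : ∀ T : Finset (Fin n), scoresMeasure n ((F T) ×ˢ (G T))
      = ∏ b, (if b ∈ T then unif (Set.Iio (α b))
          else unif (Set.Ici (α b)) * unif (Set.Iio (β b))) := by
    intro T
    rw [scoresMeasure, Measure.prod_prod, hμ1, hμ2, ← Finset.prod_mul_distrib]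
    refine Finset.prod_congr rfl fun b _ => ?_
    split_ifs with hb
    · simp
    · rfl
  calc ∑ T : Finset (Fin n), scoresMeasure n ((F T) ×ˢ (G T))
      = ∑ T : Finset (Fin n), (∏ b ∈ T, unif (Set.Iio (α b)))
          * ∏ b ∈ Tᶜ, (unif (Set.Ici (α b)) * unif (Set.Iio (β b))) := by
        refine Finset.sum_congr rfl fun T _ => ?_
        rw [hRT T, Finset.prod_ite]
        congr 1
        · apply Finset.prod_congr _ (fun _ _ => rfl)
          ext b; simp
        · apply Finset.prod_congr _ (fun _ _ => rfl)
          ext b; simp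
    _ = ∏ b, (unif (Set.Iio (α b)) + unif (Set.Ici (α b)) * unif (Set.Iio (β b))) :=
        (Fintype.prod_add _ _).symm
    _ = ∏ b, ENNReal.ofReal (1 - cl (1 - α b) * cl (1 - β b)) := by
        refine Finset.prod_congr rfl fun b _ => ?_
        rw [unif_Iio, unif_Ici, unif_Iio, ← ENNReal.ofReal_mul (cl_nonneg _),
          ← ENNReal.ofReal_add (cl_nonneg _) (mul_nonneg (cl_nonneg _) (cl_nonneg _))]
        congr 1
        have h1 := cl_add_cl_one_sub (α b)
        have h2 := cl_add_cl_one_sub (β b)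
        nlinarith [cl_nonneg (1 - α b), cl_nonneg (1 - β b)]

/-! ### analytic helper lemmas -/

/-- master pointwise estimate -/
lemma master {L X Y t : ℝ} (hL : 0 < L)
    (hsign : 0 < X ↔ 0 < Y) (hX0 : X ≠ 0) (hY0 : Y ≠ 0)
    (wX : |X| ≤ 4*L → (|X| - L < t ∧ t < |X| + L))
    (wY : |Y| ≤ 4*L → (|Y| - L < t ∧ t < |Y| + L))
    (w5X : 4*L < |X| → 3*L < t)
    (w5Y : 4*L < |Y| → 3*L < t) :
    cl (2*L - Y) * cl (2*L + X) ≤ max 0 ((3*L - t) * (3*L + t)) := by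
  rcases le_or_gt (cl (2*L - Y) * cl (2*L + X)) 0 with hp | hp
  · exact le_trans hp (le_max_left _ _)
  · have h1 : 0 < cl (2*L - Y) := by
      rcases (mul_pos_iff.mp hp) with ⟨h, _⟩ | ⟨h, _⟩
      · exact h
      · exact absurd h (not_lt.mpr (cl_nonneg _))
    have h2 : 0 < cl (2*L + X) := by
      rcases (mul_pos_iff.mp hp) with ⟨_, h⟩ | ⟨_, h⟩
      · exact h
      · exact absurd h (not_lt.mpr (cl_nonneg _))
    have hY2 : Y < 2*L := by linarith [cl_pos_arg h1]
    have hX2 : -(2*L) < X := by linarith [cl_pos_arg h2]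
    refine le_trans ?_ (le_max_right _ _)
    rcases lt_trichotomy X 0 with hX | hX | hX
    · -- X < 0, hence Y < 0
      have hY : Y < 0 := by
        rcases lt_trichotomy Y 0 with h | h | h
        · exact h
        · exact absurd h hY0
        · exact absurd (hsign.mpr h) (not_lt.mpr hX.le)
      have haX : |X| = -X := abs_of_neg hX
      have haY : |Y| = -Y := abs_of_neg hY
      have hXw := wX (by rw [haX]; linarith)
      rw [haX] at hXw
      have hY4 : |Y| ≤ 4*L := by
        by_contra hc
        push_neg at hc
        linarith [w5Y hc, hXw.2]
      have hYw := wY hY4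
      rw [haY] at hYw
      have hq1 : cl (2*L - Y) ≤ 3*L + t := by
        calc cl (2*L - Y) ≤ 2*L - Y := cl_le_self (by linarith)
        _ ≤ 3*L + t := by linarith [hYw.1]
      have hq2 : cl (2*L + X) ≤ 3*L - t := by
        calc cl (2*L + X) ≤ 2*L + X := cl_le_self (by linarith)
        _ ≤ 3*L - t := by linarith [hXw.2]
      calc cl (2*L - Y) * cl (2*L + X) ≤ (3*L + t) * (3*L - t) :=
            mul_le_mul hq1 hq2 (cl_nonneg _) (by linarith [hXw.2])
      _ = (3*L - t) * (3*L + t) := by ring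
    · exact absurd hX hX0
    · -- X > 0, hence Y > 0
      have hY : 0 < Y := hsign.mp hX
      have haY : |Y| = Y := abs_of_pos hY
      have hYw := wY (by rw [haY]; linarith)
      rw [haY] at hYw
      have hX4 : |X| ≤ 4*L := by
        by_contra hc
        push_neg at hc
        linarith [w5X hc, hYw.2]
      have hXw := wX hX4
      rw [abs_of_pos hX] at hXw
      have hq1 : cl (2*L - Y) ≤ 3*L - t := by
        calc cl (2*L - Y) ≤ 2*L - Y := cl_le_self (by linarith)
        _ ≤ 3*L - t := by linarith [hYw.2]
      have hq2 : cl (2*L + X) ≤ 3*L + t := by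
        calc cl (2*L + X) ≤ 2*L + X := cl_le_self (by linarith)
        _ ≤ 3*L + t := by linarith [hXw.1]
      exact mul_le_mul hq1 hq2 (cl_nonneg _) (by linarith [hYw.2])

lemma exp_le_one_sub {p : ℝ} (h0 : 0 ≤ p) (h1 : p ≤ 11/111) :
    Real.exp (-(111/100 * p)) ≤ 1 - p := by
  have h := Real.add_one_le_exp (111/100 * p)
  have key : 1 ≤ (1 - p) * Real.exp (111/100 * p) := by nlinarith
  have h2 : Real.exp (-(111/100*p)) * Real.exp (111/100*p) = 1 := by
    rw [← Real.exp_add]; simp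
  nlinarith [Real.exp_pos (111/100*p), Real.exp_pos (-(111/100*p))]

lemma log_ge_four {x : ℝ} (hx : 100 ≤ x) : 4 ≤ Real.log x := by
  rw [Real.le_log_iff_exp_le (by linarith)]
  have h1 : Real.exp 1 ≤ 2.7182818286 := (Real.exp_one_lt_d9).le
  calc Real.exp 4 = (Real.exp 1)^(4:ℕ) := by
        rw [← Real.exp_nat_mul]; norm_num
  _ ≤ 2.7182818286^(4:ℕ) := pow_le_pow_left₀ (Real.exp_pos 1).le h1 4
  _ ≤ 100 := by norm_num
  _ ≤ x := hx

lemma log_le_two_sqrt {x : ℝ} (hx : 1 ≤ x) : Real.log x ≤ 2 * Real.sqrt x := by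
  have h0 : (0:ℝ) < x := by linarith
  have hs : 0 < Real.sqrt x := Real.sqrt_pos.mpr h0
  have h1 : Real.log x = 2 * Real.log (Real.sqrt x) := by
    conv_lhs => rw [← Real.sq_sqrt h0.le]
    rw [Real.log_pow]
    push_cast
    ring
  rw [h1]
  have := Real.log_le_sub_one_of_pos hs
  linarith

/-- Numeric consequences of `n ≥ 100` and `L ≤ (1/8)(log n / n)^(1/3)`. -/
lemma numeric_bounds (n : ℕ) (hn : 100 ≤ n) (L : ℝ) (hL : 0 < L)
    (hLle : L ≤ (1/8) * (Real.log n / n) ^ ((1:ℝ)/3)) :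
    L ≤ 3/40 ∧ 9*L^2 ≤ 11/111 ∧
    (111/100) * ((4*L*((n:ℝ)-2)+3) * (9*L^2) + (2*L*((n:ℝ)-2)+2) * (5*L^2))
      ≤ 1/8 * Real.log n := by
  have hnR : (100:ℝ) ≤ (n:ℝ) := by exact_mod_cast hn
  have hnpos : (0:ℝ) < n := by linarith
  have hlog4 : 4 ≤ Real.log n := log_ge_four hnR
  have hlogpos : 0 < Real.log n := by linarith
  have hA0 : 0 ≤ Real.log n / n := by positivity
  set u : ℝ := (Real.log n / n) ^ ((1:ℝ)/3) with hu
  have hupos : 0 < u := Real.rpow_pos_of_pos (by positivity) _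
  have hu3 : u^(3:ℕ) = Real.log n / n := by
    rw [hu, ← Real.rpow_natCast ((Real.log n / n) ^ ((1:ℝ)/3)) 3, ← Real.rpow_mul hA0]
    norm_num
  have h8 : L ≤ u/8 := by linarith
  -- log n / n ≤ 1/5
  have hsqrt : (10:ℝ) ≤ Real.sqrt n := by
    rw [show (10:ℝ) = Real.sqrt 100 by
      rw [show (100:ℝ) = 10^2 by norm_num, Real.sqrt_sq (by norm_num)]]
    exact Real.sqrt_le_sqrt hnR
  have hsq : Real.sqrt n * Real.sqrt n = (n:ℝ) := Real.mul_self_sqrt hnpos.le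
  have hA5 : Real.log n / n ≤ 1/5 := by
    have h1 : Real.log n ≤ 2 * Real.sqrt n := log_le_two_sqrt (by linarith)
    rw [div_le_iff₀ hnpos]
    calc Real.log n ≤ 2 * Real.sqrt n := h1
    _ ≤ 1/5 * (Real.sqrt n * Real.sqrt n) := by nlinarith
    _ = 1/5 * n := by rw [hsq]
  have hu35 : u ≤ 3/5 := by
    by_contra hc
    push_neg at hc
    have h1 : (3/5:ℝ)^(3:ℕ) < u^(3:ℕ) := by
      apply pow_lt_pow_left₀ hc (by norm_num)
      norm_num
    rw [hu3] at h1
    norm_num at h1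
    linarith
  have hL340 : L ≤ 3/40 := by linarith
  refine ⟨hL340, by nlinarith, ?_⟩
  -- main inequality
  have hL3 : L^3 ≤ u^3 / 512 := by
    calc L^3 ≤ (u/8)^3 := pow_le_pow_left₀ hL.le h8 3
    _ = u^3/512 := by ring
  have hL2 : L^2 ≤ u^2 / 64 := by
    calc L^2 ≤ (u/8)^2 := pow_le_pow_left₀ hL.le h8 2
    _ = u^2/64 := by ring
  have hu3' : u^3 * n = Real.log n := by
    have h1 : u^(3:ℕ) * n = (Real.log n / n) * n := by rw [hu3]
    rw [div_mul_cancel₀ _ (ne_of_gt hnpos)] at h1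
    exact_mod_cast h1
  have hun : 16428/647 ≤ u * n := by
    have hcu : ((16428:ℝ)/647)^(3:ℕ) ≤ (u * n)^(3:ℕ) := by
      have h1 : (u*(n:ℝ))^(3:ℕ) = u^3 * n * (n:ℝ)^2 := by ring
      rw [h1, hu3']
      calc ((16428:ℝ)/647)^(3:ℕ) ≤ 40000 := by norm_num
      _ = 4 * (100:ℝ)^2 := by norm_num
      _ ≤ 4 * (n:ℝ)^2 := by nlinarith
      _ ≤ Real.log n * (n:ℝ)^2 := mul_le_mul_of_nonneg_right hlog4 (sq_nonneg _)
    exact le_of_pow_le_pow_left₀ (by norm_num) (by positivity) hcu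
  have hkey : 4107/6400 * u^2 ≤ 647/25600 * (u^3 * (n:ℝ)) := by
    have h := mul_le_mul_of_nonneg_left hun (by positivity : (0:ℝ) ≤ 647/25600 * u^2)
    calc 4107/6400 * u^2 = 647/25600 * u^2 * (16428/647) := by ring
    _ ≤ 647/25600 * u^2 * (u * n) := h
    _ = 647/25600 * (u^3 * n) := by ring
  have hexp : (4*L*((n:ℝ)-2)+3) * (9*L^2) + (2*L*((n:ℝ)-2)+2) * (5*L^2)
      = 46*(L^3*((n:ℝ)-2)) + 37*L^2 := by ring
  rw [hexp]
  have hn2 : (0:ℝ) ≤ (n:ℝ) - 2 := by linarith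
  have h46 : 46*(L^3*((n:ℝ)-2)) ≤ 46/512 * (u^3 * n) := by
    have h1 : L^3*((n:ℝ)-2) ≤ (u^3/512) * ((n:ℝ)-2) :=
      mul_le_mul_of_nonneg_right hL3 hn2
    have h2 : (u^3/512) * ((n:ℝ)-2) ≤ (u^3/512) * n := by
      apply mul_le_mul_of_nonneg_left (by linarith) (by positivity)
    calc 46*(L^3*((n:ℝ)-2)) ≤ 46*((u^3/512) * n) := by linarith
    _ = 46/512 * (u^3 * n) := by ring
  have h37 : 37*L^2 ≤ 37/64 * u^2 := by linarith
  rw [← hu3']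
  linarith [hkey, h46, h37]

instance scoresMeasure_prob (n : ℕ) : IsProbabilityMeasure (scoresMeasure n) := by
  unfold scoresMeasure
  infer_instance

/-- real version of Nat.dist -/
lemma natdist_cast (k m : ℕ) : (Nat.dist k m : ℝ) = |(k:ℝ) - m| := by
  rcases le_total k m with h | h
  · rw [Nat.dist_eq_sub_of_le h, abs_of_nonpos (sub_nonpos.mpr (by exact_mod_cast h))]
    push_cast [Nat.cast_sub h]
    ring
  · rw [Nat.dist_eq_sub_of_le_right h,
      abs_of_nonneg (sub_nonneg.mpr (by exact_mod_cast h))]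
    push_cast [Nat.cast_sub h]
    ring

lemma card_dist_le {n : ℕ} {rk : Fin n → ℕ} (hrk : Function.Injective rk) (k0 m : ℕ) :
    (Finset.univ.filter fun b => Nat.dist k0 (rk b) ≤ m).card ≤ 2*m+1 := by
  classical
  have hmem : ∀ b ∈ Finset.univ.filter (fun b => Nat.dist k0 (rk b) ≤ m),
      rk b ∈ Finset.Icc (k0 - m) (k0 + m) := by
    intro b hb
    simp only [Finset.mem_filter, Finset.mem_univ, true_and] at hb
    rw [Finset.mem_Icc]
    simp only [Nat.dist] at hb
    omega
  calc (Finset.univ.filter fun b => Nat.dist k0 (rk b) ≤ m).card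
      ≤ (Finset.Icc (k0 - m) (k0 + m)).card :=
        Finset.card_le_card_of_injOn rk hmem (hrk.injOn)
  _ = k0 + m + 1 - (k0 - m) := Nat.card_Icc _ _
  _ ≤ 2*m+1 := by omega

lemma card_dist_band {n : ℕ} {rk : Fin n → ℕ} (hrk : Function.Injective rk)
    (k0 m₁ m₂ : ℕ) (h12 : m₁ ≤ m₂) :
    (Finset.univ.filter fun b => m₁ < Nat.dist k0 (rk b) ∧ Nat.dist k0 (rk b) ≤ m₂).card
      ≤ 2*(m₂ - m₁) := by
  classical
  have hmem : ∀ b ∈ Finset.univ.filter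
      (fun b => m₁ < Nat.dist k0 (rk b) ∧ Nat.dist k0 (rk b) ≤ m₂),
      rk b ∈ Finset.Icc (k0 - m₂) (k0 + m₂) \ Finset.Icc (k0 - m₁) (k0 + m₁) := by
    intro b hb
    simp only [Finset.mem_filter, Finset.mem_univ, true_and] at hb
    rw [Finset.mem_sdiff, Finset.mem_Icc, Finset.mem_Icc]
    simp only [Nat.dist] at hb
    omega
  calc (Finset.univ.filter fun b =>
        m₁ < Nat.dist k0 (rk b) ∧ Nat.dist k0 (rk b) ≤ m₂).card
      ≤ (Finset.Icc (k0 - m₂) (k0 + m₂) \ Finset.Icc (k0 - m₁) (k0 + m₁)).card :=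
        Finset.card_le_card_of_injOn rk hmem (hrk.injOn)
  _ ≤ 2*(m₂ - m₁) := by
      rw [Finset.card_sdiff_of_subset (Finset.Icc_subset_Icc (by omega) (by omega))]
      rw [Nat.card_Icc, Nat.card_Icc]
      omega

set_option maxHeartbeats 2000000 in
/-- Suppose `n ≥ 100`, `0 < L ≤ (1/8)(ln n/n)^(1/3)`, and the
(distinct) public ratings avoid B4 and B5. Then the expectation, over the
independent uniform private scores `s = (s^M, s^W)`, of the number of men `m_i`
(here indexed by `a`, with aligned woman `b₀`) such that for every woman `b`
(whose aligned man is `a'`) the match `(a, b)` gives `a` a loss exceeding `L`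
or gives `b` a loss exceeding `L`, is at least `n^(7/8)`. -/
theorem stmt16 (n : ℕ) (hn : 100 ≤ n) (L : ℝ) (hL : 0 < L)
    (hLle : L ≤ (1/8) * (Real.log n / n) ^ ((1:ℝ)/3))
    (rM rW : Fin n → ℝ)
    (hrM : Function.Injective rM) (hrW : Function.Injective rW)
    (h4 : ¬ EventB4 n L rM rW) (h5 : ¬ EventB5 n L rM rW) :
    (n : ℝ) ^ ((7:ℝ)/8) ≤
    ∫ s : (Fin n → Fin n → ℝ) × (Fin n → Fin n → ℝ),
      (Nat.card {a : Fin n // ∀ b b₀ a' : Fin n,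
        rankOf rM a = rankOf rW b₀ → rankOf rM a' = rankOf rW b →
        (L < (rW b₀ + 1)/2 - (rW b + s.1 a b)/2 ∨
         L < (rM a' + 1)/2 - (rM a + s.2 b a)/2)} : ℝ)
      ∂ (scoresMeasure n) := by
  classical
  obtain ⟨hL340, h9L2, hmainineq⟩ := numeric_bounds n hn L hL hLle
  have hnR : (100:ℝ) ≤ (n:ℝ) := by exact_mod_cast hn
  have hnpos : (0:ℝ) < n := by linarith
  have hn2 : (0:ℝ) < (n:ℝ) - 2 := by linarith
  -- alignment maps
  obtain ⟨π, σ, hπ, hσ, hσπ, hπσ⟩ : ∃ π σ : Fin n → Fin n,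
      (∀ a, rankOf rW (π a) = rankOf rM a) ∧ (∀ b, rankOf rM (σ b) = rankOf rW b) ∧
      (∀ a, σ (π a) = a) ∧ (∀ b, π (σ b) = b) := by
    have hfM : Function.Injective (fun a => (⟨rankOf rM a, rankOf_lt a⟩ : Fin n)) :=
      fun a b h => rank_injective hrM (congrArg Fin.val h)
    have hfW : Function.Injective (fun a => (⟨rankOf rW a, rankOf_lt a⟩ : Fin n)) :=
      fun a b h => rank_injective hrW (congrArg Fin.val h)
    let rkM : Fin n ≃ Fin n :=
      Equiv.ofBijective _ (Finite.injective_iff_bijective.mp hfM)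
    let rkW : Fin n ≃ Fin n :=
      Equiv.ofBijective _ (Finite.injective_iff_bijective.mp hfW)
    refine ⟨fun a => rkW.symm (rkM a), fun b => rkM.symm (rkW b), ?_, ?_, ?_, ?_⟩
    · intro a
      have h1 : rkW (rkW.symm (rkM a)) = rkM a := rkW.apply_symm_apply _
      exact congrArg Fin.val h1
    · intro b
      have h1 : rkM (rkM.symm (rkW b)) = rkW b := rkM.apply_symm_apply _
      exact congrArg Fin.val h1
    · intro a
      show rkM.symm (rkW (rkW.symm (rkM a))) = a
      rw [Equiv.apply_symm_apply, Equiv.symm_apply_apply]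
    · intro b
      show rkW.symm (rkM (rkM.symm (rkW b))) = b
      rw [Equiv.apply_symm_apply, Equiv.symm_apply_apply]
  have hb0 : ∀ a b₀, rankOf rM a = rankOf rW b₀ → b₀ = π a := by
    intro a b₀ h
    apply rank_injective hrW
    rw [hπ a]; exact h.symm
  have ha' : ∀ b a', rankOf rM a' = rankOf rW b → a' = σ b := by
    intro b a' h
    apply rank_injective hrM
    rw [hσ b]; exact h
  -- events
  set E : Fin n → Set ((Fin n → Fin n → ℝ) × (Fin n → Fin n → ℝ)) :=
    fun a => {s | ∀ b, s.1 a b < rW (π a) - rW b + 1 - 2*L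
        ∨ s.2 b a < rM (σ b) - rM a + 1 - 2*L} with hEdef
  have hEm : ∀ a, MeasurableSet (E a) := by
    intro a
    have h1 : E a = ⋂ b, ({s : (Fin n → Fin n → ℝ) × (Fin n → Fin n → ℝ) |
          s.1 a b < rW (π a) - rW b + 1 - 2*L}
        ∪ {s | s.2 b a < rM (σ b) - rM a + 1 - 2*L}) := by
      ext s
      simp only [hEdef, Set.mem_setOf_eq, Set.mem_iInter, Set.mem_union]
    rw [h1]
    refine MeasurableSet.iInter fun b => MeasurableSet.union ?_ ?_
    · exact measurableSet_lt
        ((measurable_pi_apply b).comp ((measurable_pi_apply a).comp measurable_fst))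
        measurable_const
    · exact measurableSet_lt
        ((measurable_pi_apply a).comp ((measurable_pi_apply b).comp measurable_snd))
        measurable_const
  have hEiff : ∀ (s : (Fin n → Fin n → ℝ) × (Fin n → Fin n → ℝ)) a,
      (∀ b b₀ a' : Fin n,
        rankOf rM a = rankOf rW b₀ → rankOf rM a' = rankOf rW b →
        (L < (rW b₀ + 1)/2 - (rW b + s.1 a b)/2 ∨
         L < (rM a' + 1)/2 - (rM a + s.2 b a)/2)) ↔ s ∈ E a := by
    intro s a
    constructor
    · intro h b
      rcases h b (π a) (σ b) (hπ a).symm (hσ b) with h1 | h1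
      · left; linarith
      · right; linarith
    · intro h b b₀ a' h1 h2
      obtain rfl : b₀ = π a := hb0 a b₀ h1
      obtain rfl : a' = σ b := ha' b a' h2
      rcases h b with h1 | h1
      · left; linarith
      · right; linarith
  -- integral reduction
  have hInt : (∫ s : (Fin n → Fin n → ℝ) × (Fin n → Fin n → ℝ),
      (Nat.card {a : Fin n // ∀ b b₀ a' : Fin n,
        rankOf rM a = rankOf rW b₀ → rankOf rM a' = rankOf rW b →
        (L < (rW b₀ + 1)/2 - (rW b + s.1 a b)/2 ∨
         L < (rM a' + 1)/2 - (rM a + s.2 b a)/2)} : ℝ)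
      ∂ (scoresMeasure n))
      = ∑ a, ((scoresMeasure n) (E a)).toReal := by
    have hcard : ∀ s : (Fin n → Fin n → ℝ) × (Fin n → Fin n → ℝ),
        (Nat.card {a : Fin n // ∀ b b₀ a' : Fin n,
          rankOf rM a = rankOf rW b₀ → rankOf rM a' = rankOf rW b →
          (L < (rW b₀ + 1)/2 - (rW b + s.1 a b)/2 ∨
           L < (rM a' + 1)/2 - (rM a + s.2 b a)/2)} : ℝ)
          = ∑ a, Set.indicator (E a) (fun _ => (1:ℝ)) s := by
      intro s
      rw [Nat.card_eq_fintype_card, Fintype.card_subtype, Finset.card_filter]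
      push_cast
      refine Finset.sum_congr rfl fun a _ => ?_
      by_cases h : s ∈ E a
      · rw [if_pos ((hEiff s a).mpr h), Set.indicator_of_mem h]
      · rw [if_neg (fun hc => h ((hEiff s a).mp hc)), Set.indicator_of_notMem h]
    calc (∫ s : (Fin n → Fin n → ℝ) × (Fin n → Fin n → ℝ),
        (Nat.card {a : Fin n // ∀ b b₀ a' : Fin n,
          rankOf rM a = rankOf rW b₀ → rankOf rM a' = rankOf rW b →
          (L < (rW b₀ + 1)/2 - (rW b + s.1 a b)/2 ∨
           L < (rM a' + 1)/2 - (rM a + s.2 b a)/2)} : ℝ)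
        ∂ (scoresMeasure n))
        = ∫ s, (∑ a, Set.indicator (E a) (fun _ => (1:ℝ)) s) ∂ (scoresMeasure n) :=
          integral_congr_ae (Filter.Eventually.of_forall fun s => hcard s)
      _ = ∑ a, ∫ s, Set.indicator (E a) (fun _ => (1:ℝ)) s ∂ (scoresMeasure n) :=
          integral_finset_sum _ (fun a _ => (integrable_const (1:ℝ)).indicator (hEm a))
      _ = ∑ a, ((scoresMeasure n) (E a)).toReal := by
          refine Finset.sum_congr rfl fun a _ => ?_
          rw [integral_indicator_const (1:ℝ) (hEm a)]
          simp
          rfl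
  -- per-a lower bound
  have hperA : ∀ a, (n:ℝ) ^ (-(1:ℝ)/8) ≤ ((scoresMeasure n) (E a)).toReal := by
    intro a
    have hmea : scoresMeasure n (E a)
        = ∏ b, ENNReal.ofReal (1 - cl (1 - (rW (π a) - rW b + 1 - 2*L))
            * cl (1 - (rM (σ b) - rM a + 1 - 2*L))) :=
      scores_event_measure n a _ _
    set p : Fin n → ℝ := fun b => cl (1 - (rW (π a) - rW b + 1 - 2*L))
        * cl (1 - (rM (σ b) - rM a + 1 - 2*L)) with hpdef
    have hps : ∀ b, p b = cl (2*L - (rW (π a) - rW b)) * cl (2*L + (rM a - rM (σ b))) := by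
      intro b
      rw [hpdef]
      congr 2 <;> ring
    have hpnn : ∀ b, 0 ≤ p b := fun b => mul_nonneg (cl_nonneg _) (cl_nonneg _)
    have hple1 : ∀ b, p b ≤ 1 := fun b =>
      mul_le_one₀ (cl_le_one _) (cl_nonneg _) (cl_le_one _)
    have hval : ((scoresMeasure n) (E a)).toReal = ∏ b, (1 - p b) := by
      rw [hmea, ENNReal.toReal_prod]
      refine Finset.prod_congr rfl fun b _ => ENNReal.toReal_ofReal ?_
      nlinarith [cl_le_one (1 - (rW (π a) - rW b + 1 - 2*L)),
        cl_le_one (1 - (rM (σ b) - rM a + 1 - 2*L)),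
        cl_nonneg (1 - (rW (π a) - rW b + 1 - 2*L)),
        cl_nonneg (1 - (rM (σ b) - rM a + 1 - 2*L))]
    -- rank distance machinery
    set k0 : ℕ := rankOf rW (π a) with hk0
    set dd : Fin n → ℕ := fun b => Nat.dist k0 (rankOf rW b) with hdd
    set m₁ : ℕ := ⌊2*L*((n:ℝ)-2)⌋₊ + 1 with hm₁
    set m₂ : ℕ := ⌊3*L*((n:ℝ)-2)⌋₊ + 1 with hm₂
    have hm12 : m₁ ≤ m₂ :=
      Nat.add_le_add_right (Nat.floor_le_floor (by nlinarith)) 1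
    have hm1low : 2*L*((n:ℝ)-2) < (m₁:ℝ) := by
      rw [hm₁]; push_cast; exact Nat.lt_floor_add_one _
    have hm1up : (m₁:ℝ) ≤ 2*L*((n:ℝ)-2) + 1 := by
      rw [hm₁]; push_cast
      have := Nat.floor_le (by nlinarith : (0:ℝ) ≤ 2*L*((n:ℝ)-2))
      linarith
    have hm2low : 3*L*((n:ℝ)-2) < (m₂:ℝ) := by
      rw [hm₂]; push_cast; exact Nat.lt_floor_add_one _
    have hm2up : (m₂:ℝ) ≤ 3*L*((n:ℝ)-2) + 1 := by
      rw [hm₂]; push_cast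
      have := Nat.floor_le (by nlinarith : (0:ℝ) ≤ 3*L*((n:ℝ)-2))
      linarith
    -- master estimate for b ≠ π a
    have hmaster : ∀ b, b ≠ π a →
        p b ≤ max 0 ((3*L - ((dd b:ℝ) - 1)/((n:ℝ)-2)) * (3*L + ((dd b:ℝ) - 1)/((n:ℝ)-2))) := by
      intro b hbne
      set t : ℝ := ((dd b:ℝ) - 1)/((n:ℝ)-2) with htdef
      have hne : a ≠ σ b := by
        intro h
        apply hbne
        rw [h, hπσ b]
      have hX0 : rM a - rM (σ b) ≠ 0 := sub_ne_zero_of_ne (fun h => hne (hrM h))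
      have hY0 : rW (π a) - rW b ≠ 0 :=
        sub_ne_zero_of_ne (fun h => hbne (hrW h).symm)
      have hsign : 0 < rM a - rM (σ b) ↔ 0 < rW (π a) - rW b := by
        rw [sub_pos, sub_pos, ← rank_lt_iff hrM, ← rank_lt_iff hrW, hσ b, ← hπ a]
      have hDM : (countBetween rM (rM a) (rM (σ b)) : ℝ) = (dd b : ℝ) + 1 := by
        rw [countBetween_real hrM hne, hdd, hk0, ← hπ a, hσ b, ← natdist_cast]
      have hDW : (countBetween rW (rW (π a)) (rW b) : ℝ) = (dd b : ℝ) + 1 := by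
        rw [countBetween_real hrW (fun h => hbne h.symm), hdd, hk0, ← natdist_cast]
      have hB4 : ∀ hd, ¬ hd → True := fun _ _ => trivial
      have wX : |rM a - rM (σ b)| ≤ 4*L →
          (|rM a - rM (σ b)| - L < t ∧ t < |rM a - rM (σ b)| + L) := by
        intro h
        have hw : (2 + |rM a - rM (σ b)| * ((n:ℝ)-2) - L*((n:ℝ)-2) <
             (countBetween rM (rM a) (rM (σ b)) : ℝ) ∧
           (countBetween rM (rM a) (rM (σ b)) : ℝ) <
             2 + |rM a - rM (σ b)| * ((n:ℝ)-2) + L*((n:ℝ)-2)) := by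
          by_contra hc
          exact h4 ⟨a, σ b, π a, b, hne, (hπ a).symm, hσ b, Or.inl ⟨h, hc⟩⟩
        rw [hDM] at hw
        constructor
        · rw [htdef, lt_div_iff₀ hn2]; nlinarith [hw.1]
        · rw [htdef, div_lt_iff₀ hn2]; nlinarith [hw.2]
      have wY : |rW (π a) - rW b| ≤ 4*L →
          (|rW (π a) - rW b| - L < t ∧ t < |rW (π a) - rW b| + L) := by
        intro h
        have hw : (2 + |rW (π a) - rW b| * ((n:ℝ)-2) - L*((n:ℝ)-2) <
             (countBetween rW (rW (π a)) (rW b) : ℝ) ∧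
           (countBetween rW (rW (π a)) (rW b) : ℝ) <
             2 + |rW (π a) - rW b| * ((n:ℝ)-2) + L*((n:ℝ)-2)) := by
          by_contra hc
          exact h4 ⟨a, σ b, π a, b, hne, (hπ a).symm, hσ b, Or.inr ⟨h, hc⟩⟩
        rw [hDW] at hw
        constructor
        · rw [htdef, lt_div_iff₀ hn2]; nlinarith [hw.1]
        · rw [htdef, div_lt_iff₀ hn2]; nlinarith [hw.2]
      have w5X : 4*L < |rM a - rM (σ b)| → 3*L < t := by
        intro h
        have hw : ¬ ((countBetween rM (rM a) (rM (σ b)) : ℝ) ≤ 2 + 3*L*((n:ℝ)-2)) := by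
          intro hc
          exact h5 ⟨a, σ b, π a, b, hne, (hπ a).symm, hσ b, Or.inr ⟨h, hc⟩⟩
        rw [hDM] at hw
        push_neg at hw
        rw [htdef, lt_div_iff₀ hn2]; nlinarith
      have w5Y : 4*L < |rW (π a) - rW b| → 3*L < t := by
        intro h
        have hw : ¬ ((countBetween rW (rW (π a)) (rW b) : ℝ) ≤ 2 + 3*L*((n:ℝ)-2)) := by
          intro hc
          exact h5 ⟨a, σ b, π a, b, hne, (hπ a).symm, hσ b, Or.inl ⟨h, hc⟩⟩
        rw [hDW] at hw
        push_neg at hw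
        rw [htdef, lt_div_iff₀ hn2]; nlinarith
      rw [hps b]
      exact master hL hsign hX0 hY0 wX wY w5X w5Y
    -- pointwise bounds
    have claim9 : ∀ b, p b ≤ 9*L^2 := by
      intro b
      by_cases hb : b = π a
      · subst hb
        rw [hps]
        rw [hσπ a, sub_self, sub_self, sub_zero, add_zero]
        calc cl (2*L) * cl (2*L) ≤ (2*L) * (2*L) :=
              mul_le_mul (cl_le_self (by linarith)) (cl_le_self (by linarith))
                (cl_nonneg _) (by linarith)
        _ ≤ 9*L^2 := by nlinarith
      · refine le_trans (hmaster b hb) (max_le (by positivity) ?_)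
        nlinarith [sq_nonneg (((dd b:ℝ) - 1)/((n:ℝ)-2))]
    have hddne : ∀ b, b ≠ π a → 1 ≤ dd b := by
      intro b hb
      rcases Nat.eq_zero_or_pos (dd b) with h | h
      · exfalso
        have h2 : k0 = rankOf rW b := Nat.eq_of_dist_eq_zero h
        exact hb (rank_injective hrW h2).symm
        -- k0 = rankOf rW (π a); injective gives π a = b
      · exact h
    have claim5 : ∀ b, m₁ < dd b → p b ≤ 5*L^2 := by
      intro b hb
      have hbne : b ≠ π a := by
        intro h
        rw [h, hdd] at hb
        simp only [hk0, Nat.dist_self] at hb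
        omega
      have hcast : (m₁:ℝ) + 1 ≤ (dd b:ℝ) := by exact_mod_cast hb
      have ht : 2*L < ((dd b:ℝ) - 1)/((n:ℝ)-2) := by
        rw [lt_div_iff₀ hn2]; nlinarith
      refine le_trans (hmaster b hbne) (max_le (by positivity) ?_)
      nlinarith
    have claim0 : ∀ b, m₂ < dd b → p b ≤ 0 := by
      intro b hb
      have hbne : b ≠ π a := by
        intro h
        rw [h, hdd] at hb
        simp only [hk0, Nat.dist_self] at hb
        omega
      have hcast : (m₂:ℝ) + 1 ≤ (dd b:ℝ) := by exact_mod_cast hb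
      have ht : 3*L < ((dd b:ℝ) - 1)/((n:ℝ)-2) := by
        rw [lt_div_iff₀ hn2]; nlinarith
      refine le_trans (hmaster b hbne) (max_le le_rfl ?_)
      nlinarith
    -- sum bound
    have hsum : ∑ b, p b ≤ (4*L*((n:ℝ)-2)+3) * (9*L^2) + (2*L*((n:ℝ)-2)+2) * (5*L^2) := by
      have hsplit1 := Finset.sum_filter_add_sum_filter_not Finset.univ
        (fun b => dd b ≤ m₁) p
      have hsplit2 := Finset.sum_filter_add_sum_filter_not
        (Finset.univ.filter (fun b => ¬ dd b ≤ m₁)) (fun b => dd b ≤ m₂) p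
      have hrkinj : Function.Injective (fun b => rankOf rW b) := rank_injective hrW
      have hb1 : ∑ b ∈ Finset.univ.filter (fun b => dd b ≤ m₁), p b
          ≤ (2*(m₁:ℝ)+1) * (9*L^2) := by
        calc ∑ b ∈ Finset.univ.filter (fun b => dd b ≤ m₁), p b
            ≤ (Finset.univ.filter (fun b => dd b ≤ m₁)).card • (9*L^2) :=
              Finset.sum_le_card_nsmul _ _ _ (fun b _ => claim9 b)
          _ = ((Finset.univ.filter (fun b => dd b ≤ m₁)).card : ℝ) * (9*L^2) := by
              rw [nsmul_eq_mul]
          _ ≤ (2*(m₁:ℝ)+1) * (9*L^2) := by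
              apply mul_le_mul_of_nonneg_right _ (by positivity)
              have h2 : (Finset.univ.filter (fun b => dd b ≤ m₁)).card ≤ 2*m₁+1 :=
                card_dist_le hrkinj k0 m₁
              have h3 : ((Finset.univ.filter (fun b => dd b ≤ m₁)).card : ℝ)
                  ≤ ((2*m₁+1 : ℕ):ℝ) := Nat.cast_le.mpr h2
              refine le_trans h3 ?_
              push_cast
              linarith
      have hb2 : ∑ b ∈ (Finset.univ.filter (fun b => ¬ dd b ≤ m₁)).filter
            (fun b => dd b ≤ m₂), p b
          ≤ (2*((m₂:ℝ)-(m₁:ℝ))) * (5*L^2) := by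
        have hset : (Finset.univ.filter (fun b => ¬ dd b ≤ m₁)).filter (fun b => dd b ≤ m₂)
            = Finset.univ.filter (fun b => m₁ < dd b ∧ dd b ≤ m₂) := by
          rw [Finset.filter_filter]
          apply Finset.filter_congr
          intro b _
          rw [not_le]
        calc ∑ b ∈ (Finset.univ.filter (fun b => ¬ dd b ≤ m₁)).filter
              (fun b => dd b ≤ m₂), p b
            ≤ ((Finset.univ.filter (fun b => ¬ dd b ≤ m₁)).filter
              (fun b => dd b ≤ m₂)).card • (5*L^2) := by
              apply Finset.sum_le_card_nsmul
              intro b hbmem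
              simp only [Finset.mem_filter, Finset.mem_univ, true_and, not_le] at hbmem
              exact claim5 b hbmem.1
          _ = (((Finset.univ.filter (fun b => ¬ dd b ≤ m₁)).filter
              (fun b => dd b ≤ m₂)).card : ℝ) * (5*L^2) := by rw [nsmul_eq_mul]
          _ ≤ (2*((m₂:ℝ)-(m₁:ℝ))) * (5*L^2) := by
              apply mul_le_mul_of_nonneg_right _ (by positivity)
              rw [hset]
              have hcd : (Finset.univ.filter (fun b => m₁ < dd b ∧ dd b ≤ m₂)).card
                  ≤ 2*(m₂ - m₁) := card_dist_band hrkinj k0 m₁ m₂ hm12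
              have h1 : (((Finset.univ.filter (fun b => m₁ < dd b ∧ dd b ≤ m₂)).card) : ℝ)
                  ≤ ((2*(m₂ - m₁) : ℕ) : ℝ) := Nat.cast_le.mpr hcd
              refine le_trans h1 ?_
              push_cast [Nat.cast_sub hm12]
              linarith
      have hb3 : ∑ b ∈ (Finset.univ.filter (fun b => ¬ dd b ≤ m₁)).filter
            (fun b => ¬ dd b ≤ m₂), p b ≤ 0 := by
        apply Finset.sum_nonpos
        intro b hbmem
        simp only [Finset.mem_filter, Finset.mem_univ, true_and, not_le] at hbmem
        exact claim0 b hbmem.2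
      have hm2m1 : (m₂:ℝ) - (m₁:ℝ) ≤ L*((n:ℝ)-2) + 1 := by linarith
      have htot : ∑ b, p b ≤ (2*(m₁:ℝ)+1) * (9*L^2) + (2*((m₂:ℝ)-(m₁:ℝ))) * (5*L^2) := by
        rw [← hsplit1, ← hsplit2]
        linarith
      refine le_trans htot ?_
      have e1 : (2*(m₁:ℝ)+1) * (9*L^2) ≤ (4*L*((n:ℝ)-2)+3) * (9*L^2) := by
        apply mul_le_mul_of_nonneg_right _ (by positivity)
        linarith
      have e2 : (2*((m₂:ℝ)-(m₁:ℝ))) * (5*L^2) ≤ (2*L*((n:ℝ)-2)+2) * (5*L^2) := by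
        apply mul_le_mul_of_nonneg_right _ (by positivity)
        linarith
      linarith
    -- product bound
    have hp11 : ∀ b, p b ≤ 11/111 := fun b => le_trans (claim9 b) h9L2
    rw [hval]
    calc (n:ℝ) ^ (-(1:ℝ)/8) = Real.exp (Real.log n * (-(1:ℝ)/8)) :=
          Real.rpow_def_of_pos hnpos _
      _ ≤ Real.exp (∑ b, -(111/100 * p b)) := by
          apply Real.exp_le_exp.mpr
          have hsn : ∑ b, -(111/100 * p b) = -(111/100 * ∑ b, p b) := by
            rw [Finset.mul_sum, ← Finset.sum_neg_distrib]
          rw [hsn]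
          have : (111/100) * (∑ b, p b) ≤ 1/8 * Real.log n := by
            calc (111/100) * (∑ b, p b)
                ≤ (111/100) * ((4*L*((n:ℝ)-2)+3) * (9*L^2) + (2*L*((n:ℝ)-2)+2) * (5*L^2)) := by
                  apply mul_le_mul_of_nonneg_left hsum (by norm_num)
              _ ≤ 1/8 * Real.log n := hmainineq
          linarith
      _ = ∏ b, Real.exp (-(111/100 * p b)) := Real.exp_sum _ _
      _ ≤ ∏ b, (1 - p b) :=
          Finset.prod_le_prod (fun b _ => (Real.exp_pos _).le)
            (fun b _ => exp_le_one_sub (hpnn b) (hp11 b))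
  -- conclusion
  rw [hInt]
  calc (n:ℝ)^((7:ℝ)/8) = ∑ _a : Fin n, (n:ℝ)^(-(1:ℝ)/8) := by
        rw [Finset.sum_const, Finset.card_univ, Fintype.card_fin, nsmul_eq_mul]
        rw [show ((7:ℝ)/8) = 1 + (-(1:ℝ)/8) by norm_num, Real.rpow_add hnpos,
          Real.rpow_one]
    _ ≤ ∑ a, ((scoresMeasure n) (E a)).toReal := Finset.sum_le_sum (fun a _ => hperA a)

end
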